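/- Let p be a positive integer with p ≡ 0 (mod 4), let d ≥ 1, and let S ⊂ ℝ^d be a 1-equilateral set in ℓ_p^d. Define P_a(x) = −1 + ∑_{i=1}^d (x_i − a_i)^p for each a ∈ S. Then the set of polynomials {P_a : a ∈ S} ∪ {1} ∪ {x_i^m : 1 ≤ i ≤ d, 1 ≤ m ≤ p/2} is linearly independent over ℝ in the space of real polynomials in x_1, …, x_d. -/

import Mathlib

open MvPolynomial

noncomputable def proj (d : ℕ) (i : Fin d) : MvPolynomial (Fin d) ℝ →ₐ[ℝ] Polynomial ℝ :=
  MvPolynomial.aeval (fun j => if j = i then Polynomial.X else 0)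

lemma proj_X (d : ℕ) (i j : Fin d) : proj d i (MvPolynomial.X j) =
    if j = i then Polynomial.X else 0 := by
  simp [proj]

lemma proj_C (d : ℕ) (i : Fin d) (r : ℝ) : proj d i (MvPolynomial.C r) = Polynomial.C r := by
  simp [proj, Polynomial.algebraMap_eq]

lemma coeff_X_sub_C_pow (t : ℝ) (n k : ℕ) :
    ((Polynomial.X - Polynomial.C t) ^ n).coeff k = (-t) ^ (n - k) * (n.choose k : ℝ) := by
  rw [sub_eq_add_neg, ← Polynomial.C_neg, Polynomial.coeff_X_add_C_pow]

lemma coeff_proj_Pa (p d : ℕ) (i : Fin d) (a : Fin d → ℝ) (k : ℕ) (hk : 1 ≤ k) :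
    (proj d i (MvPolynomial.C (-1) +
      ∑ j, (MvPolynomial.X j - MvPolynomial.C (a j)) ^ p)).coeff k
      = (-(a i)) ^ (p - k) * (p.choose k : ℝ) := by
  rw [map_add, map_sum, Polynomial.coeff_add, proj_C, Polynomial.coeff_C,
    if_neg (by omega), Polynomial.finset_sum_coeff, zero_add]
  rw [Finset.sum_eq_single_of_mem i (Finset.mem_univ i)]
  · rw [map_pow, map_sub, proj_X, proj_C, if_pos rfl, coeff_X_sub_C_pow]
  · intro j _ hj
    rw [map_pow, map_sub, proj_X, proj_C, if_neg hj, zero_sub, ← Polynomial.C_neg,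
      ← Polynomial.C_pow, Polynomial.coeff_C, if_neg (by omega)]

theorem equilateral_extended_family_linearIndependent (p d : ℕ) (hp : p % 4 = 0)
    (hp0 : 0 < p) (hd : 1 ≤ d) (S : Finset (Fin d → ℝ))
    (hS : ∀ x ∈ S, ∀ y ∈ S, x ≠ y → (∑ i, |x i - y i| ^ (p : ℝ)) ^ (1 / (p : ℝ)) = 1) :
    LinearIndependent ℝ (fun t : (S ⊕ (Unit ⊕ Fin d × Fin (p / 2))) =>
      match t with
      | Sum.inl a =>
          (MvPolynomial.C (-1) + ∑ i, (MvPolynomial.X i - MvPolynomial.C (a.1 i)) ^ p :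
            MvPolynomial (Fin d) ℝ)
      | Sum.inr (Sum.inl _) => (1 : MvPolynomial (Fin d) ℝ)
      | Sum.inr (Sum.inr (i, m)) => (MvPolynomial.X i : MvPolynomial (Fin d) ℝ) ^ (m.1 + 1)) := by
  have hp4 : 4 ≤ p := by omega
  have hph : 2 ≤ p / 2 := by omega
  rw [Fintype.linearIndependent_iff]
  intro g hg
  set c : S → ℝ := fun a => g (Sum.inl a) with hc_def
  set c0 : ℝ := g (Sum.inr (Sum.inl ())) with hc0_def
  set e : Fin d × Fin (p/2) → ℝ := fun x => g (Sum.inr (Sum.inr x)) with he_def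
  have hg' : (∑ a : S, c a • (MvPolynomial.C (-1) +
        ∑ i, (MvPolynomial.X i - MvPolynomial.C (a.1 i)) ^ p : MvPolynomial (Fin d) ℝ))
      + (c0 • (1 : MvPolynomial (Fin d) ℝ)
      + ∑ x : Fin d × Fin (p/2), e x • ((MvPolynomial.X x.1 : MvPolynomial (Fin d) ℝ) ^ (x.2.1 + 1)))
      = 0 := by
    rw [← hg, Fintype.sum_sum_type, Fintype.sum_sum_type]
    simp
    rfl
  -- equilateral in p-th power form
  have hS1 : ∀ x ∈ S, ∀ y ∈ S, x ≠ y → (∑ i, (x i - y i) ^ p) = 1 := by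
    intro x hx y hy hxy
    have h := hS x hx y hy hxy
    have hpe : Even p := Nat.even_iff.mpr (by omega)
    have h2 : (∑ i, |x i - y i| ^ (p : ℝ)) = ∑ i, (x i - y i) ^ p := by
      refine Finset.sum_congr rfl fun i _ => ?_
      rw [Real.rpow_natCast, hpe.pow_abs]
    rw [h2] at h
    have hnn : (0:ℝ) ≤ ∑ i, (x i - y i) ^ p :=
      Finset.sum_nonneg fun i _ => hpe.pow_nonneg _
    have h3 : ((∑ i, (x i - y i) ^ p) ^ (1 / (p:ℝ))) ^ (p:ℝ) = 1 := by
      rw [h, Real.one_rpow]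
    rwa [← Real.rpow_mul hnn, one_div, inv_mul_cancel₀ (by exact_mod_cast hp0.ne'),
      Real.rpow_one] at h3
  -- evaluation at points of S
  have heval : ∀ b : S, c b = c0 + ∑ x : Fin d × Fin (p/2), e x * (b.1 x.1) ^ (x.2.1 + 1) := by
    intro b
    have h := congrArg (MvPolynomial.eval b.1) hg'
    simp only [map_add, map_sum, smul_eq_mul, map_mul, map_pow, map_one, map_zero,
      MvPolynomial.smul_eval, MvPolynomial.eval_add, MvPolynomial.eval_sub,
      MvPolynomial.eval_X, MvPolynomial.eval_C, MvPolynomial.eval_pow, mul_one] at h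
    rw [Finset.sum_eq_single_of_mem b (Finset.mem_univ b)] at h
    · have hbb : (-1 + ∑ i, (b.1 i - b.1 i) ^ p) = -1 := by
        simp [zero_pow hp0.ne']
      rw [hbb] at h
      linarith [h]
    · intro a _ hab
      have : (∑ i, (b.1 i - a.1 i) ^ p) = 1 :=
        hS1 b.1 b.2 a.1 a.2 (fun hh => hab (Subtype.ext hh.symm))
      rw [this]
      ring
  -- coefficient identity
  have hcoeff : ∀ (i : Fin d) (k : ℕ), 1 ≤ k → k ≤ p →
      (∑ a : S, c a * ((-(a.1 i)) ^ (p - k) * (p.choose k : ℝ)))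
      + (∑ m : Fin (p/2), e (i, m) * (if k = m.1 + 1 then 1 else 0)) = 0 := by
    intro i k hk1 hkp
    have hA : (proj d i (∑ a : S, c a • (MvPolynomial.C (-1) +
        ∑ j, (MvPolynomial.X j - MvPolynomial.C (a.1 j)) ^ p : MvPolynomial (Fin d) ℝ))).coeff k
        = ∑ a : S, c a * ((-(a.1 i)) ^ (p - k) * (p.choose k : ℝ)) := by
      rw [map_sum, Polynomial.finset_sum_coeff]
      refine Finset.sum_congr rfl fun a _ => ?_
      rw [map_smul, Polynomial.coeff_smul, smul_eq_mul, coeff_proj_Pa p d i a.1 k hk1]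
    have hB1 : (proj d i (c0 • (1 : MvPolynomial (Fin d) ℝ))).coeff k = 0 := by
      rw [map_smul, map_one, Polynomial.coeff_smul, Polynomial.coeff_one,
        if_neg (by omega), smul_zero]
    have hC : (proj d i (∑ x : Fin d × Fin (p/2),
        e x • ((MvPolynomial.X x.1 : MvPolynomial (Fin d) ℝ) ^ (x.2.1 + 1)))).coeff k
        = ∑ m : Fin (p/2), e (i, m) * (if k = m.1 + 1 then 1 else 0) := by
      rw [map_sum, Polynomial.finset_sum_coeff, Fintype.sum_prod_type]
      rw [Finset.sum_eq_single_of_mem i (Finset.mem_univ i)]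
      · refine Finset.sum_congr rfl fun m _ => ?_
        rw [map_smul, map_pow, proj_X, if_pos rfl, Polynomial.coeff_smul, smul_eq_mul,
          Polynomial.coeff_X_pow]
      · intro j _ hj
        refine Finset.sum_eq_zero fun m _ => ?_
        rw [map_smul, map_pow, proj_X, if_neg hj, zero_pow (by omega), Polynomial.coeff_smul,
          Polynomial.coeff_zero, smul_zero]
    have h := congrArg (fun q => (proj d i q).coeff k) hg'
    simp only [map_add, Polynomial.coeff_add, map_zero, Polynomial.coeff_zero] at h
    rw [hA, hB1, hC] at h
    linarith [h]
  have hB : ∀ (i : Fin d) (n : ℕ), n < p / 2 → (∑ a : S, c a * (a.1 i) ^ n) = 0 := by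
    intro i n hn
    have h := hcoeff i (p - n) (by omega) (by omega)
    have hz : (∑ m : Fin (p/2), e (i, m) * if p - n = m.1 + 1 then (1:ℝ) else 0) = 0 :=
      Finset.sum_eq_zero fun m _ => by
        rw [if_neg (by omega : ¬ p - n = m.1 + 1), mul_zero]
    rw [hz] at h
    have hpn : p - (p - n) = n := by omega
    rw [hpn] at h
    have h2 : ∑ a : S, c a * ((-(a.1 i)) ^ n * (p.choose (p - n) : ℝ))
        = ((-1:ℝ) ^ n * (p.choose (p - n) : ℝ)) * ∑ a : S, c a * (a.1 i) ^ n := by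
      rw [Finset.mul_sum]
      refine Finset.sum_congr rfl fun a _ => ?_
      rw [neg_pow]; ring
    rw [h2] at h
    rw [add_zero] at h
    have hch : (0:ℝ) < (p.choose (p - n) : ℝ) := by
      exact_mod_cast Nat.choose_pos (by omega)
    have hne : ((-1:ℝ) ^ n * (p.choose (p - n) : ℝ)) ≠ 0 := by
      refine mul_ne_zero ?_ hch.ne'
      rcases neg_one_pow_eq_one_iff_even (R := ℝ) (by norm_num) |>.2 with _
      rcases Nat.even_or_odd n with he | ho
      · rw [he.neg_one_pow]; norm_num
      · rw [ho.neg_one_pow]; norm_num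
    exact (mul_eq_zero.mp h).resolve_left hne
  set last : Fin (p/2) := ⟨p/2 - 1, by omega⟩ with hlast_def
  have hN : ∀ i : Fin d, (p.choose (p/2) : ℝ) * (∑ a : S, c a * (a.1 i) ^ (p/2))
      + e (i, last) = 0 := by
    intro i
    have h := hcoeff i (p/2) (by omega) (by omega)
    have hhalf : Even (p/2) := Nat.even_iff.mpr (by omega)
    have hpn : p - p/2 = p/2 := by omega
    rw [hpn] at h
    rw [Finset.sum_eq_single_of_mem last (Finset.mem_univ last)] at h
    · rw [if_pos (by simp [hlast_def]; omega), mul_one] at h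
      have h2 : ∑ a : S, c a * ((-(a.1 i)) ^ (p/2) * (p.choose (p/2) : ℝ))
          = (p.choose (p/2) : ℝ) * ∑ a : S, c a * (a.1 i) ^ (p/2) := by
        rw [Finset.mul_sum]
        refine Finset.sum_congr rfl fun a _ => ?_
        rw [hhalf.neg_pow]; ring
      rw [h2] at h
      exact h
    · intro m _ hm
      rw [if_neg, mul_zero]
      intro hh
      exact hm (Fin.ext (by simp [hlast_def]; omega))
  have hlast1 : last.1 + 1 = p / 2 := by simp [hlast_def]; omega
  have hsum0 : (∑ a : S, c a) = 0 := by
    have h := hB ⟨0, hd⟩ 0 (by omega)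
    simpa using h
  have e2 : (∑ a : S, (c a) ^ 2)
      = ∑ i : Fin d, e (i, last) * (∑ a : S, c a * (a.1 i) ^ (p/2)) := by
    have step1 : (∑ a : S, (c a) ^ 2)
        = c0 * (∑ a : S, c a)
          + ∑ x : Fin d × Fin (p/2), e x * (∑ a : S, c a * (a.1 x.1) ^ (x.2.1 + 1)) := by
      calc (∑ a : S, (c a) ^ 2)
          = ∑ a : S, c a * (c0 + ∑ x : Fin d × Fin (p/2), e x * (a.1 x.1) ^ (x.2.1 + 1)) :=
            Finset.sum_congr rfl fun a _ => by rw [pow_two, ← heval a]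
        _ = ∑ a : S, (c a * c0 + ∑ x : Fin d × Fin (p/2), e x * (c a * (a.1 x.1) ^ (x.2.1 + 1))) := by
            refine Finset.sum_congr rfl fun a _ => ?_
            rw [mul_add, Finset.mul_sum]
            congr 1
            exact Finset.sum_congr rfl fun x _ => by ring
        _ = (∑ a : S, c a * c0)
            + ∑ a : S, ∑ x : Fin d × Fin (p/2), e x * (c a * (a.1 x.1) ^ (x.2.1 + 1)) := by
            rw [Finset.sum_add_distrib]
        _ = c0 * (∑ a : S, c a)
            + ∑ x : Fin d × Fin (p/2), e x * (∑ a : S, c a * (a.1 x.1) ^ (x.2.1 + 1)) := by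
            congr 1
            · rw [Finset.mul_sum]; exact Finset.sum_congr rfl fun a _ => by ring
            · rw [Finset.sum_comm]
              exact Finset.sum_congr rfl fun x _ => by rw [Finset.mul_sum]
    rw [step1, hsum0, mul_zero, zero_add, Fintype.sum_prod_type]
    refine Finset.sum_congr rfl fun i _ => ?_
    rw [Finset.sum_eq_single_of_mem last (Finset.mem_univ last)]
    · rw [hlast1]
    · intro m _ hm
      have : m.1 + 1 < p / 2 := by
        have : m.1 ≠ p / 2 - 1 := fun hh => hm (Fin.ext (by rw [hh]))
        omega
      rw [hB i (m.1 + 1) this, mul_zero]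
  have key : (p.choose (p/2) : ℝ) * (∑ a : S, (c a) ^ 2) + ∑ i : Fin d, (e (i, last)) ^ 2 = 0 := by
    rw [e2, Finset.mul_sum, ← Finset.sum_add_distrib]
    refine Finset.sum_eq_zero fun i _ => ?_
    linear_combination e (i, last) * hN i
  have hNpos : (0:ℝ) < (p.choose (p/2) : ℝ) := by
    exact_mod_cast Nat.cast_pos.mpr (Nat.choose_pos (by omega))
  have s1 : (0:ℝ) ≤ ∑ a : S, (c a) ^ 2 := Finset.sum_nonneg fun a _ => sq_nonneg _
  have s2 : (0:ℝ) ≤ ∑ i : Fin d, (e (i, last)) ^ 2 := Finset.sum_nonneg fun i _ => sq_nonneg _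
  have hcsq : (∑ a : S, (c a) ^ 2) = 0 := le_antisymm (by nlinarith) s1
  have hesq : (∑ i : Fin d, (e (i, last)) ^ 2) = 0 := le_antisymm (by nlinarith) s2
  have hcz : ∀ a : S, c a = 0 := by
    intro a
    have := (Finset.sum_eq_zero_iff_of_nonneg (fun a _ => sq_nonneg (c a))).mp hcsq
      a (Finset.mem_univ a)
    exact pow_eq_zero_iff (by norm_num) |>.mp this
  have helastz : ∀ i : Fin d, e (i, last) = 0 := by
    intro i
    have := (Finset.sum_eq_zero_iff_of_nonneg (fun i _ => sq_nonneg (e (i, last)))).mp hesq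
      i (Finset.mem_univ i)
    exact pow_eq_zero_iff (by norm_num) |>.mp this
  have hc0z : c0 = 0 := by
    have h := congrArg (MvPolynomial.eval (fun _ => 0 : Fin d → ℝ)) hg'
    simp only [map_add, map_sum, MvPolynomial.smul_eval, MvPolynomial.eval_add,
      MvPolynomial.eval_sub, MvPolynomial.eval_pow, MvPolynomial.eval_X, MvPolynomial.eval_C,
      map_one, map_zero, mul_one, zero_pow (by omega : (0:ℕ) + 1 ≠ 0)] at h
    have hz1 : ∀ a : S, c a * ((-1:ℝ) + ∑ i : Fin d, (0 - a.1 i) ^ p) = 0 := fun a => by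
      rw [hcz a, zero_mul]
    rw [Finset.sum_eq_zero (fun a _ => hz1 a)] at h
    have hz2 : (∑ x : Fin d × Fin (p/2), e x * (0:ℝ) ^ (x.2.1 + 1)) = 0 :=
      Finset.sum_eq_zero fun x _ => by rw [zero_pow (by omega), mul_zero]
    rw [hz2] at h
    linarith [h]
  have hez : ∀ x : Fin d × Fin (p/2), e x = 0 := by
    rintro ⟨i, m⟩
    have h := hcoeff i (m.1 + 1) (by omega) (by omega)
    have hz1 : (∑ a : S, c a * ((-(a.1 i)) ^ (p - (m.1+1)) * (p.choose (m.1+1) : ℝ))) = 0 :=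
      Finset.sum_eq_zero fun a _ => by rw [hcz a, zero_mul]
    rw [hz1, zero_add] at h
    rw [Finset.sum_eq_single_of_mem m (Finset.mem_univ m)] at h
    · rwa [if_pos rfl, mul_one] at h
    · intro m' _ hm'
      rw [if_neg (fun hh => hm' (Fin.ext (by omega))), mul_zero]
  rintro (a | u | x)
  · exact hcz a
  · cases u; exact hc0z
  · exact hez x
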